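/- Let μ > 0 and let f : ℝ → ℝ be a positive, nonincreasing, continuous function with f(y) ≤ μ/2 for all y ∈ ℝ. Define β(y) := ∫_0^y du/(μ − f(u)) for y ≥ 0, and for z > 0 set β_z := β(z). Then β is a strictly increasing continuously differentiable bijection from [0,∞) onto [0,∞), μ/μ-bounds z/μ ≤ β_z ≤ 2z/μ hold, and the function ρ^z(t) := β^{−1}(β_z − t), defined for 0 ≤ t ≤ β_z, satisfies ρ^z(0) = z, ρ^z(β_z) = 0, d/dt ρ^z(t) = f(ρ^z(t)) − μ (so d/dt ρ^z(t) ≤ −μ/2), and ρ^z(t) = z − μt + ∫_0^t f(ρ^z(s)) ds for all 0 ≤ t ≤ β_z. -/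

import Mathlib

open MeasureTheory Filter Set

/-- Let `μ > 0` and let `f` be positive, nonincreasing, continuous with `f ≤ μ/2`
everywhere.  Define `β y := ∫_0^y du/(μ - f u)` and, for `z > 0`,
`ρ^z t := β⁻¹(β z - t)` (the inverse taken on `[0,∞)`).  Then `β` is a strictly
increasing continuously differentiable bijection from `[0,∞)` onto `[0,∞)` with
derivative `1/(μ - f y)`, the bounds `z/μ ≤ β z ≤ 2z/μ` hold for `z > 0`, and for
`z > 0` the function `ρ^z` satisfies `ρ^z 0 = z`, `ρ^z (β z) = 0`, has derivative
`f (ρ^z t) - μ ≤ -μ/2` on `[0, β z]`, and solves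
`ρ^z t = z - μ t + ∫_0^t f (ρ^z s) ds` on `[0, β z]`. -/
theorem beta_rho_properties
    (μ : ℝ) (hμ : 0 < μ)
    (f : ℝ → ℝ) (hfpos : ∀ y, 0 < f y) (hfanti : Antitone f) (hfcont : Continuous f)
    (hfhalf : ∀ y, f y ≤ μ / 2)
    (β : ℝ → ℝ) (hβ : ∀ y : ℝ, β y = ∫ u in (0 : ℝ)..y, 1 / (μ - f u))
    (ρ : ℝ → ℝ → ℝ)
    (hρ : ∀ z t : ℝ, ρ z t = Function.invFunOn β (Ici (0 : ℝ)) (β z - t)) :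
    StrictMonoOn β (Ici (0 : ℝ)) ∧
    (∀ y : ℝ, HasDerivAt β (1 / (μ - f y)) y) ∧
    ContinuousOn (fun y => 1 / (μ - f y)) (Ici (0 : ℝ)) ∧
    BijOn β (Ici (0 : ℝ)) (Ici (0 : ℝ)) ∧
    (∀ z > (0 : ℝ), z / μ ≤ β z ∧ β z ≤ 2 * z / μ) ∧
    (∀ z > (0 : ℝ),
      ρ z 0 = z ∧ ρ z (β z) = 0 ∧
      (∀ t ∈ Icc (0 : ℝ) (β z),
        HasDerivWithinAt (ρ z) (f (ρ z t) - μ) (Icc (0 : ℝ) (β z)) t ∧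
          f (ρ z t) - μ ≤ -(μ / 2)) ∧
      (∀ t ∈ Icc (0 : ℝ) (β z),
        ρ z t = z - μ * t + ∫ s in (0 : ℝ)..t, f (ρ z s))) := by
  have hβfun : β = fun y => ∫ u in (0:ℝ)..y, 1 / (μ - f u) := funext hβ
  set g : ℝ → ℝ := fun u => 1 / (μ - f u) with hg
  have hden : ∀ u, 0 < μ - f u := fun u => by have := hfhalf u; linarith
  have hdenne : ∀ u, μ - f u ≠ 0 := fun u => (hden u).ne'
  have hgpos : ∀ u, 0 < g u := fun u => one_div_pos.mpr (hden u)
  have hglb : ∀ u, 1 / μ ≤ g u := by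
    intro u
    exact one_div_le_one_div_of_le (hden u) (by have := hfpos u; linarith)
  have hgub : ∀ u, g u ≤ 2 / μ := by
    intro u
    have h2 : μ / 2 ≤ μ - f u := by have := hfhalf u; linarith
    calc g u ≤ 1 / (μ / 2) := one_div_le_one_div_of_le (by positivity) h2
    _ = 2 / μ := by field_simp
  have hgcont : Continuous g := continuous_const.div (continuous_const.sub hfcont)
    hdenne
  -- derivative of β
  have hβderiv : ∀ y, HasDerivAt β (g y) y := by
    intro y
    rw [hβfun]
    exact intervalIntegral.integral_hasDerivAt_right
      (hgcont.intervalIntegrable _ _)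
      hgcont.aestronglyMeasurable.stronglyMeasurableAtFilter
      hgcont.continuousAt
  have hβcont : Continuous β := by
    have : Differentiable ℝ β := fun y => (hβderiv y).differentiableAt
    exact this.continuous
  have hβmono : StrictMono β :=
    strictMono_of_deriv_pos fun x => by rw [(hβderiv x).deriv]; exact hgpos x
  have hβ0 : β 0 = 0 := by rw [hβ]; simp
  -- bounds: for a ≤ b, (b - a)/μ ≤ β b - β a ≤ 2(b-a)/μ
  have hkey : ∀ a b : ℝ, a ≤ b → (b - a) * (1 / μ) ≤ β b - β a ∧ β b - β a ≤ (b - a) * (2 / μ) := by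
    intro a b hab
    have hsub : β b - β a = ∫ u in a..b, g u := by
      rw [hβfun]
      exact intervalIntegral.integral_interval_sub_left
        (hgcont.intervalIntegrable _ _) (hgcont.intervalIntegrable _ _)
    constructor
    · rw [hsub]
      calc (b - a) * (1 / μ) = ∫ _ in a..b, (1 / μ) := by
            rw [intervalIntegral.integral_const]; simp [smul_eq_mul]
      _ ≤ ∫ u in a..b, g u := by
            apply intervalIntegral.integral_mono_on hab
              (intervalIntegrable_const) (hgcont.intervalIntegrable _ _)
            intro u _; exact hglb u
    · rw [hsub]
      calc (∫ u in a..b, g u) ≤ ∫ _ in a..b, (2 / μ) := by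
            apply intervalIntegral.integral_mono_on hab
              (hgcont.intervalIntegrable _ _) intervalIntegrable_const
            intro u _; exact hgub u
      _ = (b - a) * (2 / μ) := by rw [intervalIntegral.integral_const]; simp [smul_eq_mul]
  have hbound : ∀ y : ℝ, 0 ≤ y → y / μ ≤ β y ∧ β y ≤ 2 * y / μ := by
    intro y hy
    obtain ⟨h1, h2⟩ := hkey 0 y hy
    rw [hβ0] at h1 h2
    constructor
    · calc y / μ = (y - 0) * (1 / μ) := by ring
      _ ≤ β y - 0 := h1
      _ = β y := by ring
    · calc β y = β y - 0 := by ring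
      _ ≤ (y - 0) * (2 / μ) := h2
      _ = 2 * y / μ := by ring
  -- surjectivity
  have hβtop : Tendsto β atTop atTop := by
    have h1 : (fun y : ℝ => y / μ) ≤ᶠ[atTop] β := by
      filter_upwards [eventually_ge_atTop (0:ℝ)] with y hy
      exact (hbound y hy).1
    exact tendsto_atTop_mono' atTop h1 (tendsto_id.atTop_div_const hμ)
  have hβbot : Tendsto β atBot atBot := by
    have h1 : β ≤ᶠ[atBot] (fun y : ℝ => y / μ) := by
      filter_upwards [eventually_le_atBot (0:ℝ)] with y hy
      have h := (hkey y 0 hy).1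
      rw [hβ0] at h
      have hyy : y / μ = -((0 - y) * (1/μ)) := by ring
      linarith
    exact tendsto_atBot_mono' atBot h1 (tendsto_id.atBot_div_const hμ)
  have hβsurj : Function.Surjective β := hβcont.surjective hβtop hβbot
  -- the global inverse
  set e := StrictMono.orderIsoOfSurjective β hβmono hβsurj with he
  set J : ℝ → ℝ := fun y => e.symm y with hJ
  have hJright : ∀ y, β (J y) = y := fun y =>
    StrictMono.orderIsoOfSurjective_self_symm_apply β hβmono hβsurj y
  have hJleft : ∀ x, J (β x) = x := fun x =>
    StrictMono.orderIsoOfSurjective_symm_apply_self β hβmono hβsurj x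
  have hJcont : Continuous J := OrderIso.continuous e.symm
  have hJnn : ∀ y, 0 ≤ y → 0 ≤ J y := by
    intro y hy
    by_contra h
    push_neg at h
    have := hβmono h
    rw [hJright, hβ0] at this
    linarith
  have hJderiv : ∀ y, HasDerivAt J (μ - f (J y)) y := by
    intro y
    have h := HasDerivAt.of_local_left_inverse (f := β) (g := J)
      hJcont.continuousAt (hβderiv (J y)) (hgpos (J y)).ne'
      (Eventually.of_forall hJright)
    simp only [hg, one_div, inv_inv] at h
    exact h
  -- invFunOn agrees with J on Ici 0
  have hinv : ∀ y : ℝ, 0 ≤ y → Function.invFunOn β (Ici (0:ℝ)) y = J y := by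
    intro y hy
    have hex : ∃ a ∈ Ici (0:ℝ), β a = y := ⟨J y, hJnn y hy, hJright y⟩
    have h1 := Function.invFunOn_eq hex
    exact hβmono.injective (by rw [h1, hJright])
  -- assemble
  refine ⟨hβmono.strictMonoOn _, hβderiv, hgcont.continuousOn, ?_, ?_, ?_⟩
  · refine ⟨?_, hβmono.injective.injOn, ?_⟩
    · intro y hy
      have := hβmono.monotone hy
      rw [hβ0] at this
      exact this
    · intro c hc
      exact ⟨J c, hJnn c hc, hJright c⟩
  · intro z hz
    exact hbound z hz.le
  · intro z hz
    have hβznn : 0 ≤ β z := by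
      have := (hbound z hz.le).1
      have : 0 < z / μ := by positivity
      linarith [(hbound z hz.le).1]
    -- ρ z s = J (β z - s) for s ≤ β z
    have hρeq : ∀ s : ℝ, s ≤ β z → ρ z s = J (β z - s) := by
      intro s hs
      rw [hρ, hinv _ (by linarith)]
    have hρ0 : ρ z 0 = z := by
      rw [hρeq 0 hβznn]
      simpa using hJleft z
    have hρβ : ρ z (β z) = 0 := by
      rw [hρeq _ le_rfl]
      simp only [sub_self]
      have h0 := hJleft 0
      rw [hβ0] at h0
      exact h0
    -- derivative of s ↦ J (β z - s)
    have hcomp : ∀ s : ℝ, HasDerivAt (fun u => J (β z - u)) (f (J (β z - s)) - μ) s := by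
      intro s
      have h1 : HasDerivAt (fun u : ℝ => β z - u) (-1) s := by
        simpa using (hasDerivAt_id s).const_sub (β z)
      have := (hJderiv (β z - s)).comp s h1
      rw [show f (J (β z - s)) - μ = (μ - f (J (β z - s))) * -1 by ring]
      exact this
    have hderivW : ∀ t ∈ Icc (0:ℝ) (β z),
        HasDerivWithinAt (ρ z) (f (ρ z t) - μ) (Icc (0:ℝ) (β z)) t := by
      intro t ht
      have h1 := (hcomp t).hasDerivWithinAt (s := Icc (0:ℝ) (β z))
      have h2 : HasDerivWithinAt (ρ z) (f (J (β z - t)) - μ) (Icc (0:ℝ) (β z)) t := by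
        apply h1.congr
        · intro s hs; exact hρeq s hs.2
        · exact hρeq t ht.2
      rwa [← hρeq t ht.2] at h2
    refine ⟨hρ0, hρβ, fun t ht => ⟨hderivW t ht, by have := hfhalf (ρ z t); linarith⟩, ?_⟩
    -- integral equation
    have hρcont : ContinuousOn (ρ z) (Icc (0:ℝ) (β z)) :=
      fun x hx => (hderivW x hx).continuousWithinAt
    intro t ht
    obtain ⟨ht0, htβ⟩ := ht
    have hsubset : Icc (0:ℝ) t ⊆ Icc (0:ℝ) (β z) := Icc_subset_Icc le_rfl htβ
    have hρcont' : ContinuousOn (ρ z) (Icc (0:ℝ) t) := hρcont.mono hsubset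
    have hintg : IntervalIntegrable (fun s => f (ρ z s)) volume 0 t := by
      apply ContinuousOn.intervalIntegrable
      rw [uIcc_of_le ht0]
      exact hfcont.comp_continuousOn hρcont'
    have hderiv' : ∀ x ∈ Ioo (0:ℝ) t, HasDerivWithinAt (ρ z) (f (ρ z x) - μ) (Ioi x) x := by
      intro x hx
      have hxβ : x < β z := lt_of_lt_of_le hx.2 htβ
      have heq : ρ z =ᶠ[nhds x] fun u => J (β z - u) := by
        filter_upwards [Iio_mem_nhds hxβ] with s hs
        exact hρeq s (le_of_lt hs)
      have : HasDerivAt (ρ z) (f (J (β z - x)) - μ) x :=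
        (hcomp x).congr_of_eventuallyEq heq
      rw [← hρeq x hxβ.le] at this
      exact this.hasDerivWithinAt
    have hftc := intervalIntegral.integral_eq_sub_of_hasDeriv_right_of_le ht0
      hρcont' hderiv' (by
        apply ContinuousOn.intervalIntegrable
        rw [uIcc_of_le ht0]
        exact (hfcont.comp_continuousOn hρcont').sub continuousOn_const)
    have hsplit : (∫ s in (0:ℝ)..t, (f (ρ z s) - μ)) =
        (∫ s in (0:ℝ)..t, f (ρ z s)) - μ * t := by
      rw [intervalIntegral.integral_sub hintg intervalIntegrable_const,
        intervalIntegral.integral_const]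
      simp [smul_eq_mul, mul_comm]
    rw [hsplit, hρ0] at hftc
    linarith
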